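/- Let n ≥ 2 and let f be a monic real polynomial of degree n. For every positive integer m and real x, |∑_{k=1}^{m} e^{i f(k) x}|^{2^{n−1}} ≤ 2^{2^{n−1}}·m^{2^{n−1}−1}·(n−1) + 2^{2^{n−1}+1}·m^{2^{n−1}−n}·∑_{y_1,...,y_{n−1}=1}^{m} min{ m, 1/(2‖ n!·y_1⋯y_{n−1}·x/(2π) ‖) }, where ‖t‖ denotes the distance from t to the nearest integer (terms with ‖·‖ = 0 are interpreted as m). -/

import Mathlib

/-- distance from `t` to the nearest integer -/
noncomputable def nearestDist (t : ℝ) : ℝ := min (Int.fract t) (1 - Int.fract t)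

open Finset Polynomial Complex

section WeylAux

/-- phase exponential -/
noncomputable def eph (x t : ℝ) : ℂ := Complex.exp (Complex.I * t * x)

/-- exponential sum over `Icc 1 M` -/
noncomputable def WS (x : ℝ) (g : ℕ → ℝ) (M : ℕ) : ℂ := ∑ k ∈ Finset.Icc 1 M, eph x (g k)

/-- iterated forward differences of a phase function -/
def dd : (j : ℕ) → (Fin j → ℕ) → (ℕ → ℝ) → (ℕ → ℝ)
  | 0, _, g => g
  | j + 1, y, g => dd j (Fin.tail y) (fun k => g (k + y 0) - g k)

/-- iterated polynomial differences -/
noncomputable def qd : (j : ℕ) → (Fin j → ℕ) → ℝ[X] → ℝ[X]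
  | 0, _, p => p
  | j + 1, y, p => qd j (Fin.tail y) (p.comp (X + C (y 0 : ℝ)) - p)

lemma eph_abs (x t : ℝ) : ‖eph x t‖ = 1 := by
  rw [eph, Complex.norm_exp]
  simp [Complex.mul_re, Complex.mul_im]

lemma eph_conj (x t : ℝ) : (starRingEnd ℂ) (eph x t) = eph x (-t) := by
  rw [eph, eph, ← Complex.exp_conj]
  congr 1
  simp [Complex.conj_I]

lemma eph_mul (x s t : ℝ) : eph x s * eph x t = eph x (s + t) := by
  rw [eph, eph, eph, ← Complex.exp_add]
  congr 1
  push_cast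
  ring

lemma sum_eph_le (x : ℝ) (h : ℕ → ℝ) (L : ℕ) :
    ‖∑ k ∈ Finset.Icc 1 L, eph x (h k)‖ ≤ L := by
  calc ‖∑ k ∈ Finset.Icc 1 L, eph x (h k)‖
      ≤ ∑ k ∈ Finset.Icc 1 L, ‖eph x (h k)‖ := norm_sum_le _ _
    _ = L := by simp [eph_abs, Nat.card_Icc]

lemma WS_abs_le (x : ℝ) (g : ℕ → ℝ) (M : ℕ) : ‖WS x g M‖ ≤ M :=
  sum_eph_le x g M

lemma vdc (x : ℝ) (g : ℕ → ℝ) (m M : ℕ) (hm : 0 < m) (hM : M ≤ m) :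
    ‖WS x g M‖ ^ 2 ≤
      2 * ∑ a ∈ Finset.range m, ‖WS x (fun k => g (k + a) - g k) (M - a)‖ := by
  set A : ℕ → ℂ := fun a => WS x (fun k => g (k + a) - g k) (M - a) with hA
  set T : Finset (ℕ × ℕ) := (Finset.Icc 1 M) ×ˢ (Finset.Icc 1 M) with hT
  set F : ℕ × ℕ → ℂ := fun p => eph x (g p.1 - g p.2) with hF
  have hA0 : ‖A 0‖ = M := by
    have : A 0 = (M : ℂ) := by simp [hA, WS, eph]
    rw [this, Complex.norm_natCast]
  have h1 : ‖WS x g M‖ ^ 2 = ‖WS x g M * (starRingEnd ℂ) (WS x g M)‖ := by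
    rw [norm_mul, Complex.norm_conj, sq]
  have h2 : WS x g M * (starRingEnd ℂ) (WS x g M) = ∑ p ∈ T, F p := by
    rw [WS, map_sum, Finset.sum_mul_sum, hT, Finset.sum_product]
    refine Finset.sum_congr rfl fun k _ => Finset.sum_congr rfl fun l _ => ?_
    rw [eph_conj, eph_mul, hF, ← sub_eq_add_neg]
  set U : ℂ := ∑ p ∈ T.filter (fun p => p.2 < p.1), F p with hU
  have hdiag : ∑ p ∈ T.filter (fun p => p.1 = p.2), F p = (M : ℂ) := by
    have himg : T.filter (fun p => p.1 = p.2) = (Finset.Icc 1 M).image (fun k => (k, k)) := by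
      ext ⟨a, b⟩
      simp only [hT, Finset.mem_filter, Finset.mem_product, Finset.mem_Icc, Finset.mem_image,
        Prod.mk.injEq]
      constructor
      · rintro ⟨⟨h1, h2⟩, h3⟩; exact ⟨a, by omega, rfl, by omega⟩
      · rintro ⟨k, hk, rfl, rfl⟩; omega
    rw [himg, Finset.sum_image (fun a _ b _ h => by simpa using (Prod.mk.injEq .. ▸ h).1)]
    simp [hF, eph]
  have hsplit : ∑ p ∈ T, F p = (M : ℂ) + (U + (starRingEnd ℂ) U) := by
    rw [← hdiag, ← Finset.sum_filter_add_sum_filter_not T (fun p => p.1 = p.2)]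
    congr 1
    have hU2 : (starRingEnd ℂ) U = ∑ p ∈ T.filter (fun p => p.1 < p.2), F p := by
      rw [hU, map_sum]
      refine (Finset.sum_nbij' (fun p => (p.2, p.1)) (fun p => (p.2, p.1)) ?_ ?_ ?_ ?_ ?_).symm
      · intro p hp; simp only [hT, Finset.mem_filter, Finset.mem_product] at hp ⊢; exact ⟨⟨hp.1.2, hp.1.1⟩, hp.2⟩
      · intro p hp; simp only [hT, Finset.mem_filter, Finset.mem_product] at hp ⊢; exact ⟨⟨hp.1.2, hp.1.1⟩, hp.2⟩
      · intro p _; rfl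
      · intro p _; rfl
      · intro p _; rw [hF, eph_conj, neg_sub]
    rw [hU2]
    rw [← Finset.sum_filter_add_sum_filter_not (T.filter (fun p => ¬ p.1 = p.2)) (fun p => p.2 < p.1),
      Finset.filter_filter, Finset.filter_filter]
    congr 2
    · ext p; simp only [Finset.mem_filter]; constructor
      · rintro ⟨h, h2⟩; exact ⟨h, by omega⟩
      · rintro ⟨h, h2⟩; exact ⟨h, by omega, h2⟩
    · ext p; simp only [Finset.mem_filter]; constructor
      · rintro ⟨h, h2⟩; exact ⟨h, by omega⟩
      · rintro ⟨h, h2⟩; exact ⟨h, by omega, by omega⟩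
  have hUle : ‖U‖ ≤ ∑ y ∈ Finset.Icc 1 (M - 1), ‖A y‖ := by
    have hUeq : U = ∑ y ∈ Finset.Icc 1 (M - 1), A y := by
      rw [hU, hA]
      simp only [WS]
      rw [Finset.sum_sigma']
      refine Finset.sum_nbij' (fun p => ⟨p.1 - p.2, p.2⟩) (fun q => (q.2 + q.1, q.2)) ?_ ?_ ?_ ?_ ?_
      · rintro ⟨a, b⟩ hp
        simp only [hT, Finset.mem_filter, Finset.mem_product, Finset.mem_Icc] at hp
        simp only [Finset.mem_sigma, Finset.mem_Icc]
        omega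
      · rintro ⟨y, l⟩ hq
        simp only [Finset.mem_sigma, Finset.mem_Icc] at hq
        simp only [hT, Finset.mem_filter, Finset.mem_product, Finset.mem_Icc]
        omega
      · rintro ⟨a, b⟩ hp
        simp only [hT, Finset.mem_filter, Finset.mem_product, Finset.mem_Icc] at hp
        have h1 : b + (a - b) = a := by omega
        simp [h1]
      · rintro ⟨y, l⟩ hq
        simp only [Finset.mem_sigma, Finset.mem_Icc] at hq
        have h1 : l + y - l = y := by omega
        simp [h1]
      · rintro ⟨a, b⟩ hp
        simp only [hT, Finset.mem_filter, Finset.mem_product, Finset.mem_Icc] at hp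
        have h1 : b + (a - b) = a := by omega
        simp [hF, h1]
    rw [hUeq]
    exact norm_sum_le _ _
  have hfin : ‖A 0‖ + ∑ y ∈ Finset.Icc 1 (M - 1), ‖A y‖
      ≤ ∑ a ∈ Finset.range m, ‖A a‖ := by
    have h00 : (0:ℕ) ∉ Finset.Icc 1 (M-1) := by simp
    have hins : ‖A 0‖ + ∑ y ∈ Finset.Icc 1 (M - 1), ‖A y‖
        = ∑ a ∈ insert 0 (Finset.Icc 1 (M - 1)), ‖A a‖ :=
      (Finset.sum_insert (f := fun a => ‖A a‖) h00).symm
    rw [hins]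
    refine Finset.sum_le_sum_of_subset_of_nonneg ?_ (fun _ _ _ => norm_nonneg _)
    intro y hy
    simp only [Finset.mem_insert, Finset.mem_Icc] at hy
    simp only [Finset.mem_range]
    omega
  calc ‖WS x g M‖ ^ 2 = ‖(M : ℂ) + (U + (starRingEnd ℂ) U)‖ := by
        rw [h1, h2, hsplit]
    _ ≤ ‖(M : ℂ)‖ + (‖U‖ + ‖(starRingEnd ℂ) U‖) :=
        le_trans (norm_add_le _ _) (by gcongr; exact norm_add_le _ _)
    _ = (M : ℝ) + 2 * ‖U‖ := by rw [Complex.norm_natCast, Complex.norm_conj]; ring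
    _ ≤ ‖A 0‖ + 2 * ∑ y ∈ Finset.Icc 1 (M - 1), ‖A y‖ := by
        rw [hA0]; linarith
    _ ≤ 2 * ∑ a ∈ Finset.range m, ‖A a‖ := by
        have h0 : 0 ≤ ‖A 0‖ := norm_nonneg _
        nlinarith [hfin, Finset.sum_nonneg (fun y (_ : y ∈ Finset.Icc 1 (M-1)) => norm_nonneg (A y))]

lemma sum_piFinset_cons {j m : ℕ} (F : (Fin (j + 1) → ℕ) → ℝ) :
    ∑ y ∈ Fintype.piFinset (fun _ : Fin (j + 1) => Finset.range m), F y
      = ∑ a ∈ Finset.range m, ∑ z ∈ Fintype.piFinset (fun _ : Fin j => Finset.range m),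
          F (Fin.cons a z) := by
  rw [← Finset.sum_product']
  refine Finset.sum_nbij' (fun y => (y 0, Fin.tail y)) (fun p => Fin.cons p.1 p.2) ?_ ?_ ?_ ?_ ?_
  · intro y hy
    simp only [Fintype.mem_piFinset] at hy
    simp only [Finset.mem_product, Fintype.mem_piFinset]
    exact ⟨hy 0, fun i => hy i.succ⟩
  · rintro ⟨a, z⟩ hp
    simp only [Finset.mem_product, Fintype.mem_piFinset] at hp
    simp only [Fintype.mem_piFinset]
    intro i
    refine Fin.cases ?_ ?_ i
    · simpa using hp.1
    · intro i'; simpa using hp.2 i'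
  · intro y _; exact Fin.cons_self_tail y
  · rintro ⟨a, z⟩ _; simp
  · intro y _; rw [Fin.cons_self_tail]

lemma weyl_ind (x : ℝ) (m : ℕ) (hm : 0 < m) :
    ∀ (j : ℕ) (g : ℕ → ℝ) (M : ℕ), M ≤ m →
    ‖WS x g M‖ ^ (2 ^ j) ≤
      2 ^ (2 ^ j - 1) * (m : ℝ) ^ (2 ^ j - j - 1) *
        ∑ y ∈ Fintype.piFinset (fun _ : Fin j => Finset.range m),
          ‖WS x (dd j y g) (M - ∑ i, y i)‖ := by
  intro j
  induction j with
  | zero =>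
    intro g M hM
    simp [dd]
  | succ j ih =>
    intro g M hM
    have hj2 : j + 1 ≤ 2 ^ j := Nat.lt_two_pow_self
    have h2j : 2 ^ (j + 1) = 2 * 2 ^ j := by rw [pow_succ, mul_comm]
    set S2 : ℝ := ∑ a ∈ Finset.range m, ‖WS x (fun k => g (k + a) - g k) (M - a)‖
      with hS2
    have hS2nn : 0 ≤ S2 := Finset.sum_nonneg fun a _ => norm_nonneg _
    have step1 : ‖WS x g M‖ ^ 2 ^ (j + 1) ≤ (2 * S2) ^ 2 ^ j := by
      rw [h2j, pow_mul]
      exact pow_le_pow_left₀ (by positivity) (vdc x g m M hm hM) _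
    have step2 : S2 ^ 2 ^ j ≤ (m : ℝ) ^ (2 ^ j - 1) *
        ∑ a ∈ Finset.range m,
          ‖WS x (fun k => g (k + a) - g k) (M - a)‖ ^ 2 ^ j := by
      have hcard : ((Finset.range m).card : ℝ) = m := by simp
      have hpow : 2 ^ j = (2 ^ j - 1) + 1 := by omega
      have := pow_sum_div_card_le_sum_pow
        (f := fun a => ‖WS x (fun k => g (k + a) - g k) (M - a)‖)
        (s := Finset.range m) (fun a _ => norm_nonneg _) (2 ^ j - 1)
      rw [div_le_iff₀ (by simp; positivity)] at this
      calc S2 ^ 2 ^ j = S2 ^ ((2 ^ j - 1) + 1) := by rw [← hpow]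
        _ ≤ (∑ a ∈ Finset.range m,
              ‖WS x (fun k => g (k + a) - g k) (M - a)‖ ^ ((2 ^ j - 1) + 1))
              * ((Finset.range m).card : ℝ) ^ (2 ^ j - 1) := this
        _ = (m : ℝ) ^ (2 ^ j - 1) * ∑ a ∈ Finset.range m,
              ‖WS x (fun k => g (k + a) - g k) (M - a)‖ ^ 2 ^ j := by
            rw [hcard, ← hpow]; ring
    have step3 : ∀ a ∈ Finset.range m,
        ‖WS x (fun k => g (k + a) - g k) (M - a)‖ ^ 2 ^ j ≤
          2 ^ (2 ^ j - 1) * (m : ℝ) ^ (2 ^ j - j - 1) *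
            ∑ z ∈ Fintype.piFinset (fun _ : Fin j => Finset.range m),
              ‖WS x (dd j z (fun k => g (k + a) - g k)) (M - a - ∑ i, z i)‖ :=
      fun a _ => ih _ _ (by omega)
    have hre : ∑ y ∈ Fintype.piFinset (fun _ : Fin (j + 1) => Finset.range m),
          ‖WS x (dd (j + 1) y g) (M - ∑ i, y i)‖
        = ∑ a ∈ Finset.range m, ∑ z ∈ Fintype.piFinset (fun _ : Fin j => Finset.range m),
            ‖WS x (dd j z (fun k => g (k + a) - g k)) (M - a - ∑ i, z i)‖ := by
      rw [sum_piFinset_cons]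
      refine Finset.sum_congr rfl fun a _ => Finset.sum_congr rfl fun z _ => ?_
      have h1 : dd (j + 1) (Fin.cons a z) g = dd j z (fun k => g (k + a) - g k) := by
        simp [dd, Fin.tail_cons]
      have h2 : M - ∑ i, (Fin.cons a z : Fin (j+1) → ℕ) i = M - a - ∑ i, z i := by
        rw [Fin.sum_cons]; omega
      rw [h1, h2]
    calc ‖WS x g M‖ ^ 2 ^ (j + 1) ≤ (2 * S2) ^ 2 ^ j := step1
      _ = 2 ^ 2 ^ j * S2 ^ 2 ^ j := by rw [mul_pow]
      _ ≤ 2 ^ 2 ^ j * ((m : ℝ) ^ (2 ^ j - 1) *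
            ∑ a ∈ Finset.range m,
              ‖WS x (fun k => g (k + a) - g k) (M - a)‖ ^ 2 ^ j) := by
          gcongr
      _ ≤ 2 ^ 2 ^ j * ((m : ℝ) ^ (2 ^ j - 1) *
            ∑ a ∈ Finset.range m, (2 ^ (2 ^ j - 1) * (m : ℝ) ^ (2 ^ j - j - 1) *
              ∑ z ∈ Fintype.piFinset (fun _ : Fin j => Finset.range m),
                ‖WS x (dd j z (fun k => g (k + a) - g k)) (M - a - ∑ i, z i)‖)) := by
          have := Finset.sum_le_sum step3
          gcongr
      _ = 2 ^ (2 ^ (j + 1) - 1) * (m : ℝ) ^ (2 ^ (j + 1) - (j + 1) - 1) *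
            ∑ y ∈ Fintype.piFinset (fun _ : Fin (j + 1) => Finset.range m),
              ‖WS x (dd (j + 1) y g) (M - ∑ i, y i)‖ := by
          rw [hre, Finset.mul_sum]
          rw [show (2:ℝ) ^ (2 ^ (j+1) - 1) = 2 ^ 2 ^ j * 2 ^ (2 ^ j - 1) by
            rw [← pow_add]; congr 1; omega]
          rw [show (m:ℝ) ^ (2 ^ (j+1) - (j+1) - 1) = (m:ℝ) ^ (2 ^ j - 1) * (m:ℝ) ^ (2 ^ j - j - 1) by
            rw [← pow_add]; congr 1; omega]
          simp only [Finset.mul_sum]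
          refine Finset.sum_congr rfl fun a _ => Finset.sum_congr rfl fun z _ => ?_
          ring

lemma comp_coeff (p : ℝ[X]) (a : ℝ) (d : ℕ) (hd : p.natDegree ≤ d + 1) (k : ℕ) :
    (p.comp (X + C a)).coeff k
      = ∑ i ∈ Finset.range (d + 2), p.coeff i * (a ^ (i - k) * (i.choose k : ℝ)) := by
  conv_lhs => rw [p.as_sum_range' (d + 2) (by omega)]
  rw [show ((∑ i ∈ Finset.range (d + 2), (monomial i) (p.coeff i)).comp (X + C a))
      = ∑ i ∈ Finset.range (d + 2), (monomial i (p.coeff i)).comp (X + C a) by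
    simp [Polynomial.comp, Polynomial.eval₂_finset_sum]]
  rw [Polynomial.finset_sum_coeff]
  refine Finset.sum_congr rfl fun i _ => ?_
  rw [Polynomial.monomial_comp, Polynomial.coeff_C_mul, Polynomial.coeff_X_add_C_pow]

lemma diff_step (d : ℕ) (a : ℝ) (p : ℝ[X]) (hd : p.natDegree ≤ d + 1) :
    (p.comp (X + C a) - p).natDegree ≤ d ∧
      (p.comp (X + C a) - p).coeff d = ((d : ℝ) + 1) * a * p.coeff (d + 1) := by
  constructor
  · rw [Polynomial.natDegree_le_iff_coeff_eq_zero]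
    intro N hN
    rw [Polynomial.coeff_sub, comp_coeff p a d hd N]
    by_cases hN2 : N ≤ d + 1
    · have hNd : N = d + 1 := by omega
      rw [Finset.sum_eq_single N]
      · subst hNd; simp
      · intro i hi hne
        simp only [Finset.mem_range] at hi
        have : i < N := by omega
        rw [Nat.choose_eq_zero_of_lt this]
        simp
      · intro h; simp only [Finset.mem_range] at h; omega
    · have h1 : p.coeff N = 0 := Polynomial.coeff_eq_zero_of_natDegree_lt (by omega)
      rw [h1, sub_zero]
      apply Finset.sum_eq_zero
      intro i hi
      simp only [Finset.mem_range] at hi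
      rw [Nat.choose_eq_zero_of_lt (by omega)]
      simp
  · rw [Polynomial.coeff_sub, comp_coeff p a d hd d]
    rw [Finset.sum_range_succ, Finset.sum_range_succ]
    rw [Finset.sum_eq_zero (fun i hi => by
      simp only [Finset.mem_range] at hi
      rw [Nat.choose_eq_zero_of_lt (by omega)]; simp)]
    simp [Nat.choose_succ_self_right]
    ring

lemma qd_spec (j : ℕ) : ∀ (y : Fin j → ℕ) (p : ℝ[X]) (n : ℕ), p.natDegree ≤ n → j ≤ n →
    (qd j y p).natDegree ≤ n - j ∧
      (qd j y p).coeff (n - j)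
        = p.coeff n * ∏ i : Fin j, (((n - (i : ℕ) : ℕ) : ℝ) * ((y i : ℕ) : ℝ)) := by
  induction j with
  | zero =>
    intro y p n hp _
    simp [qd, hp]
  | succ j ih =>
    intro y p n hp hj
    have hn1 : 1 ≤ n := by omega
    have hstep := diff_step (n - 1) (y 0 : ℝ) p (by omega : p.natDegree ≤ (n - 1) + 1)
    have hd1 : (n - 1) + 1 = n := by omega
    rw [hd1] at hstep
    have hih := ih (Fin.tail y) (p.comp (X + C (y 0 : ℝ)) - p) (n - 1) hstep.1 (by omega)
    have hqd : qd (j + 1) y p = qd j (Fin.tail y) (p.comp (X + C (y 0 : ℝ)) - p) := rfl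
    have hsub : n - 1 - j = n - (j + 1) := by omega
    rw [hsub] at hih
    constructor
    · rw [hqd]; exact hih.1
    · rw [hqd, hih.2, hstep.2]
      rw [Fin.prod_univ_succ]
      have : ((n - 1 : ℕ) : ℝ) + 1 = ((n : ℕ) : ℝ) := by
        push_cast [Nat.cast_sub hn1]; ring
      rw [this]
      have hfac : ∀ i : Fin j, ((n - 1 - (i : ℕ) : ℕ) : ℝ) = ((n - ((i.succ : Fin (j+1)) : ℕ) : ℕ) : ℝ) := by
        intro i
        congr 1
        simp [Fin.val_succ]
        omega
      rw [Finset.prod_congr rfl (fun i _ => by rw [hfac i])]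
      simp only [Fin.val_zero, Nat.sub_zero, Fin.tail]
      ring_nf

lemma prod_desc (K : ℕ) : (∏ i : Fin K, (K + 1 - (i : ℕ))) = (K + 1).factorial := by
  induction K with
  | zero => simp
  | succ K ih =>
    rw [Fin.prod_univ_succ]
    have h1 : ∀ i : Fin K, K + 1 + 1 - ((i.succ : Fin (K+1)) : ℕ) = K + 1 - (i : ℕ) := by
      intro i; rw [Fin.val_succ]; omega
    rw [Finset.prod_congr rfl (fun i _ => h1 i), ih]
    simp [Nat.factorial_succ]

lemma dd_qd (j : ℕ) : ∀ (y : Fin j → ℕ) (p : ℝ[X]) (k : ℕ),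
    dd j y (fun t : ℕ => p.eval (t : ℝ)) k = (qd j y p).eval (k : ℝ) := by
  induction j with
  | zero => intro y p k; rfl
  | succ j ih =>
    intro y p k
    have h1 : (fun t : ℕ => p.eval ((t + y 0 : ℕ) : ℝ) - p.eval (t : ℝ))
        = (fun t : ℕ => (p.comp (X + C (y 0 : ℝ)) - p).eval (t : ℝ)) := by
      funext t
      rw [Polynomial.eval_sub, Polynomial.eval_comp]
      push_cast
      simp
    show dd j (Fin.tail y) (fun t : ℕ => p.eval ((t + y 0 : ℕ) : ℝ) - p.eval (t : ℝ)) k = _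
    rw [h1]
    exact ih (Fin.tail y) _ k

lemma nearestDist_nonneg (t : ℝ) : 0 ≤ nearestDist t := by
  rw [nearestDist]
  have h1 := Int.fract_nonneg t
  have h2 := Int.fract_lt_one t
  rcases le_or_gt (Int.fract t) (1 - Int.fract t) with h | h
  · rw [min_eq_left h]; exact h1
  · rw [min_eq_right h.le]; linarith

lemma nd_le_sin (t : ℝ) : 2 * nearestDist t ≤ |Real.sin (Real.pi * t)| := by
  have hfr : t = (⌊t⌋ : ℝ) + Int.fract t := by rw [Int.fract]; ring
  have h1 := Int.fract_nonneg t
  have h2 := Int.fract_lt_one t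
  set u := Int.fract t with hu
  have habs : |Real.sin (Real.pi * t)| = |Real.sin (Real.pi * u)| := by
    rw [hfr]
    rw [show Real.pi * ((⌊t⌋ : ℝ) + u) = Real.pi * u + (⌊t⌋ : ℤ) * Real.pi by push_cast; ring]
    rw [Real.sin_add_int_mul_pi]
    rw [abs_mul]
    rcases Int.even_or_odd ⌊t⌋ with he | ho
    · rw [he.neg_one_zpow]; simp
    · rw [Odd.neg_one_zpow ho]; simp
  rw [habs]
  rcases le_or_gt u (1/2) with h | h
  · have hnd : nearestDist t = u := by rw [nearestDist, ← hu, min_eq_left (by linarith)]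
    rw [hnd]
    have hs : 2 / Real.pi * (Real.pi * u) ≤ Real.sin (Real.pi * u) :=
      Real.mul_le_sin (by positivity) (by nlinarith [Real.pi_pos])
    have hπ : Real.pi ≠ 0 := Real.pi_ne_zero
    have : 2 / Real.pi * (Real.pi * u) = 2 * u := by field_simp
    rw [this] at hs
    calc 2 * u ≤ Real.sin (Real.pi * u) := hs
      _ ≤ |Real.sin (Real.pi * u)| := le_abs_self _
  · have hnd : nearestDist t = 1 - u := by rw [nearestDist, ← hu, min_eq_right (by linarith)]
    rw [hnd]
    have hsub : Real.sin (Real.pi * u) = Real.sin (Real.pi * (1 - u)) := by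
      rw [show Real.pi * (1 - u) = Real.pi - Real.pi * u by ring, Real.sin_pi_sub]
    rw [hsub]
    have hs : 2 / Real.pi * (Real.pi * (1 - u)) ≤ Real.sin (Real.pi * (1 - u)) :=
      Real.mul_le_sin (by nlinarith [Real.pi_pos]) (by nlinarith [Real.pi_pos])
    have hπ : Real.pi ≠ 0 := Real.pi_ne_zero
    have heq : 2 / Real.pi * (Real.pi * (1 - u)) = 2 * (1 - u) := by field_simp
    rw [heq] at hs
    calc 2 * (1 - u) ≤ Real.sin (Real.pi * (1 - u)) := hs
      _ ≤ |Real.sin (Real.pi * (1 - u))| := le_abs_self _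

lemma abs_exp_theta_sub_one (θ : ℝ) :
    ‖Complex.exp (Complex.I * θ) - 1‖ = 2 * |Real.sin (θ / 2)| := by
  have key : ∀ w : ℂ, Complex.exp (Complex.I * (2 * w)) - 1
      = Complex.exp (Complex.I * w) * (2 * Complex.I * Complex.sin w) := by
    intro w
    rw [Complex.sin]
    have e1 : Complex.exp (Complex.I * (2 * w))
        = Complex.exp (Complex.I * w) * Complex.exp (w * Complex.I) := by
      rw [← Complex.exp_add]; congr 1; ring
    have e2 : (1 : ℂ) = Complex.exp (Complex.I * w) * Complex.exp (-w * Complex.I) := by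
      rw [← Complex.exp_add, ← Complex.exp_zero]; congr 1; ring
    rw [e1]
    nth_rewrite 1 [e2]
    linear_combination Complex.exp (Complex.I * w) *
      (Complex.exp (w * Complex.I) - Complex.exp (-w * Complex.I)) * Complex.I_sq
  have h1 := key ((θ / 2 : ℝ) : ℂ)
  rw [show ((2 : ℂ) * ((θ/2 : ℝ) : ℂ)) = (θ : ℂ) by push_cast; ring] at h1
  rw [h1, norm_mul]
  have h2 : ‖Complex.exp (Complex.I * ((θ/2 : ℝ) : ℂ))‖ = 1 := by
    rw [Complex.norm_exp]
    simp [Complex.mul_re]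
  rw [h2, one_mul, norm_mul, norm_mul, Complex.norm_two, Complex.norm_I,
    ← Complex.ofReal_sin, Complex.norm_real, Real.norm_eq_abs]
  ring

lemma linear_bound (x α c : ℝ) (L m : ℕ) (hLm : L ≤ m) :
    ‖∑ k ∈ Finset.Icc 1 L, eph x (α * k + c)‖ ≤
      (if nearestDist (α * x / (2 * Real.pi)) = 0 then (m : ℝ)
       else min (m : ℝ) (1 / (2 * nearestDist (α * x / (2 * Real.pi))))) := by
  have htriv : ‖∑ k ∈ Finset.Icc 1 L, eph x (α * k + c)‖ ≤ (m : ℝ) :=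
    le_trans (sum_eph_le x _ L) (by exact_mod_cast hLm)
  set δ := nearestDist (α * x / (2 * Real.pi)) with hδ
  by_cases h0 : δ = 0
  · rw [if_pos h0]; exact htriv
  · rw [if_neg h0]
    have hδpos : 0 < δ := lt_of_le_of_ne (nearestDist_nonneg _) (Ne.symm h0)
    refine le_min htriv ?_
    set z : ℂ := eph x α with hz
    have hzk : ∀ k : ℕ, eph x (α * k + c) = eph x c * z ^ k := by
      intro k
      have h1 : z ^ k = eph x (α * k) := by
        rw [hz, eph, eph, ← Complex.exp_nat_mul]
        congr 1
        push_cast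
        ring
      rw [h1, eph_mul, add_comm]
    have hsin : 2 * δ ≤ |Real.sin (α * x / 2)| := by
      have := nd_le_sin (α * x / (2 * Real.pi))
      rwa [show Real.pi * (α * x / (2 * Real.pi)) = α * x / 2 by
        field_simp] at this
    have habs1 : ‖z - 1‖ = 2 * |Real.sin (α * x / 2)| := by
      rw [hz, eph, show Complex.I * (α : ℂ) * (x : ℂ) = Complex.I * ((α * x : ℝ) : ℂ) by
        push_cast; ring]
      exact abs_exp_theta_sub_one (α * x)
    have habspos : 0 < ‖z - 1‖ := by
      rw [habs1]; linarith
    have hzne : z ≠ 1 := by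
      intro h
      rw [h] at habspos; simp at habspos
    have hgeom : ∑ k ∈ Finset.Icc 1 L, z ^ k = z * ((z ^ L - 1) / (z - 1)) := by
      rw [show Finset.Icc 1 L = Finset.Ico 1 (L + 1) from (Finset.Ico_add_one_right_eq_Icc 1 L).symm]
      rw [Finset.sum_Ico_eq_sum_range]
      simp only [Nat.add_sub_cancel]
      calc ∑ i ∈ Finset.range L, z ^ (1 + i)
          = ∑ i ∈ Finset.range L, z * z ^ i := by
            refine Finset.sum_congr rfl fun i _ => ?_
            rw [pow_add, pow_one]
        _ = z * ∑ i ∈ Finset.range L, z ^ i := by rw [Finset.mul_sum]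
        _ = z * ((z ^ L - 1) / (z - 1)) := by rw [geom_sum_eq hzne]
    have hz1 : ‖z‖ = 1 := by rw [hz]; exact eph_abs x α
    have hnum : ‖z ^ L - 1‖ ≤ 2 := by
      calc ‖z ^ L - 1‖ ≤ ‖z ^ L‖ + ‖(-1 : ℂ)‖ := by
            rw [sub_eq_add_neg]; exact norm_add_le _ _
        _ = 2 := by rw [norm_pow, hz1, one_pow, norm_neg, norm_one]; norm_num
    calc ‖∑ k ∈ Finset.Icc 1 L, eph x (α * k + c)‖
        = ‖eph x c * (z * ((z ^ L - 1) / (z - 1)))‖ := by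
          rw [show (∑ k ∈ Finset.Icc 1 L, eph x (α * k + c))
              = eph x c * ∑ k ∈ Finset.Icc 1 L, z ^ k by
            rw [Finset.mul_sum]
            exact Finset.sum_congr rfl fun k _ => hzk k]
          rw [hgeom]
      _ = ‖z ^ L - 1‖ / ‖z - 1‖ := by
          rw [norm_mul, norm_mul, eph_abs, norm_div, hz1]
          ring
      _ ≤ 2 / (2 * (2 * δ)) := by
          refine div_le_div₀ (by norm_num) hnum (by linarith) ?_
          rw [habs1]; linarith
      _ = 1 / (2 * δ) := by
          rw [div_eq_div_iff (by linarith) (by linarith)]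
          ring

end WeylAux

open Classical in
theorem stmt19 (n : ℕ) (hn : 2 ≤ n) (f : Polynomial ℝ) (hmonic : f.Monic)
    (hdeg : f.natDegree = n) (m : ℕ) (hm : 0 < m) (x : ℝ) :
    ‖∑ k ∈ Finset.Icc 1 m, Complex.exp (Complex.I * ((f.eval ((k : ℕ) : ℝ) : ℝ) : ℂ) * (x : ℂ))‖
        ^ (2 ^ (n - 1)) ≤
      2 ^ (2 ^ (n - 1)) * (m : ℝ) ^ (2 ^ (n - 1) - 1) * ((n : ℝ) - 1) +
        2 ^ (2 ^ (n - 1) + 1) * (m : ℝ) ^ ((2 : ℤ) ^ (n - 1) - (n : ℤ)) *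
          ∑ y ∈ Fintype.piFinset fun _ : Fin (n - 1) => Finset.Icc 1 m,
            (if nearestDist ((n.factorial : ℝ) * (∏ i, ((y i : ℕ) : ℝ)) * x / (2 * Real.pi)) = 0
              then (m : ℝ)
              else min (m : ℝ)
                (1 / (2 * nearestDist
                  ((n.factorial : ℝ) * (∏ i, ((y i : ℕ) : ℝ)) * x / (2 * Real.pi))))) := by
  have hK1 : 1 ≤ n - 1 := by omega
  set K := n - 1 with hK
  have hnK : n = K + 1 := by omega
  have hj2 : K + 1 ≤ 2 ^ K := Nat.lt_two_pow_self
  set g : ℕ → ℝ := fun k => f.eval (k : ℝ) with hg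
  have hWS : (∑ k ∈ Finset.Icc 1 m,
      Complex.exp (Complex.I * ((f.eval ((k : ℕ) : ℝ) : ℝ) : ℂ) * (x : ℂ))) = WS x g m := rfl
  rw [hWS]
  have hmain := weyl_ind x m hm K g m le_rfl
  set P := Fintype.piFinset (fun _ : Fin K => Finset.range m) with hP
  set G : (Fin K → ℕ) → ℝ := fun y => ‖WS x (dd K y g) (m - ∑ i, y i)‖ with hG
  have hGnn : ∀ y, 0 ≤ G y := fun y => norm_nonneg _
  have hGle : ∀ y, G y ≤ (m : ℝ) := by
    intro y
    refine le_trans (sum_eph_le x _ _) ?_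
    exact_mod_cast Nat.sub_le m _
  -- Target summand
  set Targ : (Fin K → ℕ) → ℝ := fun y =>
    (if nearestDist ((n.factorial : ℝ) * (∏ i, ((y i : ℕ) : ℝ)) * x / (2 * Real.pi)) = 0
      then (m : ℝ)
      else min (m : ℝ)
        (1 / (2 * nearestDist
          ((n.factorial : ℝ) * (∏ i, ((y i : ℕ) : ℝ)) * x / (2 * Real.pi))))) with hTarg
  have hTargnn : ∀ y, 0 ≤ Targ y := by
    intro y
    simp only [hTarg]
    by_cases h0 : nearestDist ((n.factorial : ℝ) * (∏ i, ((y i : ℕ) : ℝ)) * x / (2 * Real.pi)) = 0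
    · rw [if_pos h0]; positivity
    · rw [if_neg h0]
      have := nearestDist_nonneg ((n.factorial : ℝ) * (∏ i, ((y i : ℕ) : ℝ)) * x / (2 * Real.pi))
      have hpos : 0 < nearestDist ((n.factorial : ℝ) * (∏ i, ((y i : ℕ) : ℝ)) * x / (2 * Real.pi)) :=
        lt_of_le_of_ne this (Ne.symm h0)
      refine le_min (by positivity) (by positivity)
  -- split into good and bad
  have hsplit : ∑ y ∈ P, G y
      = ∑ y ∈ P.filter (fun y => ∀ i, 1 ≤ y i), G y
        + ∑ y ∈ P.filter (fun y => ¬ ∀ i, 1 ≤ y i), G y :=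
    (Finset.sum_filter_add_sum_filter_not _ _ _).symm
  -- bad count
  have hbadcard : ((P.filter (fun y => ¬ ∀ i, 1 ≤ y i)).card : ℝ) ≤ (K : ℝ) * (m : ℝ) ^ (K - 1) := by
    have hsub : P.filter (fun y => ¬ ∀ i, 1 ≤ y i)
        ⊆ Finset.univ.biUnion (fun i : Fin K => P.filter (fun y => y i = 0)) := by
      intro y hy
      simp only [Finset.mem_filter, not_forall] at hy
      obtain ⟨i, hi⟩ := hy.2
      exact Finset.mem_biUnion.2 ⟨i, Finset.mem_univ _, Finset.mem_filter.2 ⟨hy.1, by omega⟩⟩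
    have hcard : ∀ i : Fin K, (P.filter (fun y => y i = 0)).card ≤ m ^ (K - 1) := by
      intro i
      have hsub2 : P.filter (fun y => y i = 0) ⊆
          Fintype.piFinset (fun j : Fin K => if j = i then ({0} : Finset ℕ) else Finset.range m) := by
        intro y hy
        simp only [Finset.mem_filter, hP, Fintype.mem_piFinset] at hy
        simp only [Fintype.mem_piFinset]
        intro j
        by_cases hj : j = i
        · subst hj; simp [hy.2]
        · simp only [if_neg hj]; exact hy.1 j
      refine le_trans (Finset.card_le_card hsub2) ?_
      rw [Fintype.card_piFinset]
      rw [Finset.prod_congr rfl (fun j (_ : j ∈ Finset.univ) => show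
          ((if j = i then ({0} : Finset ℕ) else Finset.range m)).card
            = (if j = i then 1 else m) from by
        by_cases hj : j = i <;> simp [hj])]
      rw [Finset.prod_eq_prod_diff_singleton_mul (Finset.mem_univ i)
          (fun j => if j = i then 1 else m)]
      rw [if_pos rfl, mul_one]
      rw [Finset.prod_congr rfl (fun j hj => show (if j = i then 1 else m) = m from by
        rw [if_neg]
        simp only [Finset.mem_sdiff, Finset.mem_singleton] at hj
        exact hj.2)]
      rw [Finset.prod_const]
      have hce : (Finset.univ \ {i} : Finset (Fin K)).card = K - 1 := by
        rw [Finset.card_sdiff_of_subset (by simp)]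
        simp
      rw [hce]
    have h1 : (P.filter (fun y => ¬ ∀ i, 1 ≤ y i)).card ≤ K * m ^ (K - 1) := by
      refine le_trans (Finset.card_le_card hsub) (le_trans Finset.card_biUnion_le ?_)
      refine le_trans (Finset.sum_le_sum (fun i (_ : i ∈ Finset.univ) => hcard i)) ?_
      simp [Finset.sum_const]
    exact_mod_cast h1
  have hbad : ∑ y ∈ P.filter (fun y => ¬ ∀ i, 1 ≤ y i), G y ≤ (K : ℝ) * (m : ℝ) ^ K := by
    calc ∑ y ∈ P.filter (fun y => ¬ ∀ i, 1 ≤ y i), G y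
        ≤ ((P.filter (fun y => ¬ ∀ i, 1 ≤ y i)).card : ℝ) * (m : ℝ) := by
          rw [← nsmul_eq_mul]
          exact Finset.sum_le_card_nsmul _ _ _ (fun y _ => hGle y)
      _ ≤ ((K : ℝ) * (m : ℝ) ^ (K - 1)) * (m : ℝ) := by
          have hmnn : (0:ℝ) ≤ m := Nat.cast_nonneg m
          exact mul_le_mul_of_nonneg_right hbadcard hmnn
      _ = (K : ℝ) * (m : ℝ) ^ K := by
          rw [mul_assoc, ← pow_succ]
          congr 2
          omega
  -- good part
  have hgood : ∀ y ∈ P.filter (fun y => ∀ i, 1 ≤ y i), G y ≤ Targ y := by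
    intro y hy
    simp only [Finset.mem_filter] at hy
    set q : ℝ[X] := qd K y f with hq
    have hspec := qd_spec K y f n (le_of_eq hdeg) (by omega)
    have hnm : n - K = 1 := by omega
    rw [hnm] at hspec
    have hcoeffn : f.coeff n = 1 := by
      rw [← hdeg]
      exact hmonic.coeff_natDegree
    have hprodfac : (∏ i : Fin K, (((n - (i : ℕ) : ℕ) : ℝ) * ((y i : ℕ) : ℝ)))
        = (n.factorial : ℝ) * (∏ i, ((y i : ℕ) : ℝ)) := by
      rw [Finset.prod_mul_distrib]
      congr 1
      rw [← Nat.cast_prod]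
      congr 1
      rw [hnK]
      exact prod_desc K
    have hcoeff1 : q.coeff 1 = (n.factorial : ℝ) * (∏ i, ((y i : ℕ) : ℝ)) := by
      rw [hq, hspec.2, hcoeffn, one_mul, hprodfac]
    set α : ℝ := (n.factorial : ℝ) * (∏ i, ((y i : ℕ) : ℝ)) with hα
    set c : ℝ := q.coeff 0 with hc
    have hqdeg : q.natDegree ≤ 1 := hspec.1
    have heval : ∀ t : ℝ, q.eval t = α * t + c := by
      intro t
      rw [Polynomial.eval_eq_sum_range' (show q.natDegree < 2 by omega)]
      rw [Finset.sum_range_succ, Finset.sum_range_succ, Finset.sum_range_zero]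
      rw [hcoeff1]
      ring
    have hWSy : WS x (dd K y g) (m - ∑ i, y i)
        = ∑ k ∈ Finset.Icc 1 (m - ∑ i, y i), eph x (α * k + c) := by
      rw [WS]
      refine Finset.sum_congr rfl fun k _ => ?_
      congr 1
      rw [hg, dd_qd K y f k, ← hq, heval]
    rw [hG]
    simp only
    rw [hWSy]
    exact linear_bound x α c (m - ∑ i, y i) m (Nat.sub_le m _)
  have hgoodsum : ∑ y ∈ P.filter (fun y => ∀ i, 1 ≤ y i), G y
      ≤ ∑ y ∈ Fintype.piFinset (fun _ : Fin K => Finset.Icc 1 m), Targ y := by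
    calc ∑ y ∈ P.filter (fun y => ∀ i, 1 ≤ y i), G y
        ≤ ∑ y ∈ P.filter (fun y => ∀ i, 1 ≤ y i), Targ y := Finset.sum_le_sum hgood
      _ ≤ ∑ y ∈ Fintype.piFinset (fun _ : Fin K => Finset.Icc 1 m), Targ y := by
          refine Finset.sum_le_sum_of_subset_of_nonneg ?_ (fun y _ _ => hTargnn y)
          intro y hy
          simp only [Finset.mem_filter, hP, Fintype.mem_piFinset, Finset.mem_range] at hy
          simp only [Fintype.mem_piFinset, Finset.mem_Icc]
          intro i
          exact ⟨hy.2 i, by have := hy.1 i; omega⟩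
  -- exponent conversions
  have hzpow : (m : ℝ) ^ ((2 : ℤ) ^ (n - 1) - (n : ℤ)) = (m : ℝ) ^ (2 ^ K - K - 1 : ℕ) := by
    have he : (2 : ℤ) ^ (n - 1) - (n : ℤ) = ((2 ^ K - K - 1 : ℕ) : ℤ) := by
      have e1 : ((2 : ℤ)) ^ (n - 1) = ((2 ^ K : ℕ) : ℤ) := by
        rw [← hK]; push_cast; ring
      rw [e1]
      omega
    rw [he, zpow_natCast]
  have hexp1 : (2 ^ K - K - 1 : ℕ) + K = 2 ^ K - 1 := by omega
  -- final chain
  calc ‖WS x g m‖ ^ 2 ^ K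
      ≤ 2 ^ (2 ^ K - 1) * (m : ℝ) ^ (2 ^ K - K - 1) * ∑ y ∈ P, G y := hmain
    _ = 2 ^ (2 ^ K - 1) * (m : ℝ) ^ (2 ^ K - K - 1) *
          (∑ y ∈ P.filter (fun y => ∀ i, 1 ≤ y i), G y
            + ∑ y ∈ P.filter (fun y => ¬ ∀ i, 1 ≤ y i), G y) := by rw [← hsplit]
    _ ≤ 2 ^ (2 ^ K - 1) * (m : ℝ) ^ (2 ^ K - K - 1) *
          (∑ y ∈ Fintype.piFinset (fun _ : Fin K => Finset.Icc 1 m), Targ y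
            + (K : ℝ) * (m : ℝ) ^ K) := by
        have h1 : (0:ℝ) ≤ 2 ^ (2 ^ K - 1) * (m : ℝ) ^ (2 ^ K - K - 1) := by positivity
        refine mul_le_mul_of_nonneg_left ?_ h1
        exact add_le_add hgoodsum hbad
    _ ≤ 2 ^ (2 ^ K) * (m : ℝ) ^ (2 ^ K - 1) * ((n : ℝ) - 1) +
        2 ^ (2 ^ K + 1) * (m : ℝ) ^ ((2 : ℤ) ^ (n - 1) - (n : ℤ)) *
          ∑ y ∈ Fintype.piFinset (fun _ : Fin K => Finset.Icc 1 m), Targ y := by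
        rw [mul_add]
        rw [hzpow]
        have hTsum : (0:ℝ) ≤ ∑ y ∈ Fintype.piFinset (fun _ : Fin K => Finset.Icc 1 m), Targ y :=
          Finset.sum_nonneg (fun y _ => hTargnn y)
        rw [add_comm (2 ^ (2^K) * (m:ℝ) ^ (2^K - 1) * ((n:ℝ) - 1))
          (2 ^ (2^K + 1) * (m:ℝ) ^ (2 ^ K - K - 1 : ℕ) *
            ∑ y ∈ Fintype.piFinset (fun _ : Fin K => Finset.Icc 1 m), Targ y)]
        refine add_le_add ?_ ?_
        · refine mul_le_mul_of_nonneg_right ?_ hTsum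
          refine mul_le_mul_of_nonneg_right ?_ (by positivity)
          exact pow_le_pow_right₀ (by norm_num) (by omega)
        · -- bad side
          have hKcast : ((n : ℝ) - 1) = (K : ℝ) := by
            rw [hnK]; push_cast; ring
          rw [hKcast]
          calc (2:ℝ) ^ (2^K-1) * (m:ℝ) ^ (2^K-K-1) * ((K:ℝ) * (m:ℝ)^K)
              = (2:ℝ) ^ (2^K-1) * ((m:ℝ) ^ (2^K-K-1) * (m:ℝ)^K) * (K:ℝ) := by ring
            _ = (2:ℝ) ^ (2^K-1) * (m:ℝ) ^ (2^K-1) * (K:ℝ) := by rw [← pow_add, hexp1]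
            _ ≤ (2:ℝ) ^ (2^K) * (m:ℝ) ^ (2^K-1) * (K:ℝ) := by
                refine mul_le_mul_of_nonneg_right
                  (mul_le_mul_of_nonneg_right ?_ (by positivity)) (Nat.cast_nonneg K)
                exact pow_le_pow_right₀ (by norm_num) (by omega)
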